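/- Let A be a real n×n matrix all of whose (complex) eigenvalues have strictly negative real part. Then for every y₀ ∈ ℝⁿ, the solution y(t) = exp(tA) y₀ of the linear system ẏ = Ay tends to 0 as t → +∞. -/

import Mathlib

open Filter NormedSpace Matrix Nat

attribute [local instance] Matrix.linftyOpNormedRing Matrix.linftyOpNormedAlgebra

/-- `t ^ j * exp (c * t) → 0` when `c < 0`. -/
lemma aux_real {c : ℝ} (hc : c < 0) (j : ℕ) :
    Filter.Tendsto (fun t : ℝ => t ^ j * Real.exp (c * t)) Filter.atTop (nhds 0) := by
  have hc' : 0 < -c := by linarith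
  have h1 : Filter.Tendsto (fun t : ℝ => (-c * t) ^ j * Real.exp (-(-c * t)))
      Filter.atTop (nhds 0) := by
    exact (Real.tendsto_pow_mul_exp_neg_atTop_nhds_zero j).comp
      (Filter.Tendsto.const_mul_atTop hc' tendsto_id)
  have h2 := h1.const_mul (((-c) ^ j)⁻¹)
  rw [mul_zero] at h2
  refine h2.congr fun t => ?_
  have hne : (-c) ^ j ≠ 0 := pow_ne_zero _ (by linarith)
  rw [mul_pow]
  field_simp

/-- complex scalar version -/
lemma aux_scalar {μ : ℂ} (hμ : μ.re < 0) (j : ℕ) :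
    Filter.Tendsto (fun t : ℝ => Complex.exp (t * μ) * (t : ℂ) ^ j)
      Filter.atTop (nhds 0) := by
  rw [tendsto_zero_iff_norm_tendsto_zero]
  refine ((aux_real hμ j).congr' ?_)
  filter_upwards [eventually_ge_atTop (0 : ℝ)] with t ht
  rw [norm_mul, norm_pow, Complex.norm_exp, Complex.norm_real,
    Real.norm_eq_abs, abs_of_nonneg ht]
  rw [show ((t : ℂ) * μ).re = t * μ.re by simp]
  ring

/-- Main complex vector lemma. -/
lemma aux1 (n : ℕ) (B : Matrix (Fin n) (Fin n) ℂ)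
    (h : ∀ mu ∈ spectrum ℂ B, mu.re < 0) (v : Fin n → ℂ) :
    Filter.Tendsto (fun t : ℝ => NormedSpace.exp (t • B) *ᵥ v)
      Filter.atTop (nhds 0) := by
  set f : Module.End ℂ (Fin n → ℂ) := Matrix.toLinAlgEquiv' B with hf
  let S : Submodule ℂ (Fin n → ℂ) :=
  { carrier := {w | Filter.Tendsto (fun t : ℝ => NormedSpace.exp (t • B) *ᵥ w)
      Filter.atTop (nhds 0)}
    add_mem' := fun {a b} ha hb => by
      have := ha.add hb
      rw [add_zero] at this
      exact this.congr fun t => (Matrix.mulVec_add _ _ _).symm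
    zero_mem' := by
      have : Filter.Tendsto (fun _ : ℝ => (0 : Fin n → ℂ)) Filter.atTop (nhds 0) :=
        tendsto_const_nhds
      exact this.congr fun t => (Matrix.mulVec_zero _).symm
    smul_mem' := fun c a ha => by
      have := ha.const_smul c
      rw [smul_zero] at this
      exact this.congr fun t => (Matrix.mulVec_smul _ _ _).symm }
  have hle : ∀ μ : ℂ, f.maxGenEigenspace μ ≤ S := by
    intro μ w hw
    rcases eq_or_ne w 0 with rfl | hw0
    · exact S.zero_mem
    obtain ⟨k, hk⟩ := (Module.End.mem_maxGenEigenspace f μ w).mp hw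
    have hmem : w ∈ (f.genEigenspace μ) k := by
      rw [Module.End.genEigenspace_nat]
      exact hk
    have hev : f.HasEigenvalue μ := by
      refine Module.End.hasEigenvalue_of_hasGenEigenvalue (k := k) ?_
      rw [Module.End.hasGenEigenvalue_iff]
      intro hbot
      rw [hbot] at hmem
      exact hw0 (Submodule.mem_bot ℂ |>.mp hmem)
    have hspec : μ ∈ spectrum ℂ B := by
      have h1 := hev.mem_spectrum
      rwa [hf, AlgEquiv.spectrum_eq] at h1
    have hre : μ.re < 0 := h μ hspec
    set N : Matrix (Fin n) (Fin n) ℂ := B - μ • 1 with hN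
    have hNk : N ^ k *ᵥ w = 0 := by
      have hsub : f - μ • 1 = Matrix.toLinAlgEquiv' N := by
        rw [hN, map_sub, _root_.map_smul, _root_.map_one, hf]
      have hfk : (f - μ • 1) ^ k = Matrix.toLinAlgEquiv' (N ^ k) := by
        rw [hsub, ← map_pow]
      rw [hfk] at hk
      rw [show (Matrix.toLinAlgEquiv' (N ^ k)) w = N ^ k *ᵥ w from
        Matrix.toLinAlgEquiv'_apply _ _] at hk
      exact hk
    -- key decomposition of exp (t • B) *ᵥ w
    have hdecomp : ∀ t : ℝ, NormedSpace.exp (t • B) *ᵥ w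
        = Complex.exp (t * μ) •
            ∑ j ∈ Finset.range k, (((t : ℂ) ^ j * ((j ! : ℂ))⁻¹) • (N ^ j *ᵥ w)) := by
      intro t
      have h1 : t • B = ((t : ℂ) * μ) • (1 : Matrix (Fin n) (Fin n) ℂ) + t • N := by
        rw [hN, smul_sub, ← smul_assoc]
        rw [show t • μ = (t : ℂ) * μ from Complex.real_smul]
        abel
      have hcomm : Commute (((t : ℂ) * μ) • (1 : Matrix (Fin n) (Fin n) ℂ)) (t • N) :=
        (Commute.one_left (t • N)).smul_left _
      have h2 : NormedSpace.exp (((t : ℂ) * μ) • (1 : Matrix (Fin n) (Fin n) ℂ))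
          = Complex.exp ((t : ℂ) * μ) • (1 : Matrix (Fin n) (Fin n) ℂ) := by
        erw [← Algebra.algebraMap_eq_smul_one, ← algebraMap_exp_comm,
          ← Algebra.algebraMap_eq_smul_one, Complex.exp_eq_exp_ℂ]
      -- expand exp (t • N) *ᵥ w as a finite sum
      let L : Matrix (Fin n) (Fin n) ℂ →ₗ[ℂ] (Fin n → ℂ) :=
        { toFun := fun M => M *ᵥ w
          map_add' := fun M M' => Matrix.add_mulVec M M' w
          map_smul' := fun c M => by simp [Matrix.smul_mulVec] }
      have hLc : Continuous L := L.continuous_of_finiteDimensional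
      have hsum : HasSum (fun j : ℕ => ((j ! : ℂ))⁻¹ • ((t • N) ^ j *ᵥ w))
          (NormedSpace.exp (t • N) *ᵥ w) := by
        have h0 := (NormedSpace.exp_series_hasSum_exp' (𝕂 := ℂ) (t • N)).map L hLc
        simp only [Function.comp_def, _root_.map_smul] at h0
        have e1 : ∀ j : ℕ, L ((t • N) ^ j) = (t • N) ^ j *ᵥ w := fun j => rfl
        simp only [e1] at h0
        exact h0
      have hvanish : ∀ j ∉ Finset.range k, ((j ! : ℂ))⁻¹ • ((t • N) ^ j *ᵥ w) = 0 := by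
        intro j hj
        rw [Finset.mem_range, not_lt] at hj
        have hz : N ^ j *ᵥ w = 0 := by
          have hpow : N ^ j = N ^ (j - k) * N ^ k := by
            rw [← pow_add]
            congr 1
            omega
          rw [hpow, ← Matrix.mulVec_mulVec, hNk, Matrix.mulVec_zero]
        rw [smul_pow, Matrix.smul_mulVec, hz, smul_zero, smul_zero]
      have h3 : NormedSpace.exp (t • N) *ᵥ w
          = ∑ j ∈ Finset.range k, (((t : ℂ) ^ j * ((j ! : ℂ))⁻¹) • (N ^ j *ᵥ w)) := by
        rw [← hsum.tsum_eq, tsum_eq_sum hvanish]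
        refine Finset.sum_congr rfl fun j _ => ?_
        rw [smul_pow, Matrix.smul_mulVec]
        rw [show (t ^ j : ℝ) • (N ^ j *ᵥ w) = ((t : ℂ) ^ j) • (N ^ j *ᵥ w) from by
          rw [← algebraMap_smul ℂ (t ^ j : ℝ)]
          norm_num]
        rw [smul_smul, mul_comm]
      erw [h1, NormedSpace.exp_add_of_commute hcomm, h2, smul_mul_assoc, one_mul,
        Matrix.smul_mulVec, h3]
    -- conclude the tendsto
    show Filter.Tendsto (fun t : ℝ => NormedSpace.exp (t • B) *ᵥ w) Filter.atTop (nhds 0)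
    have hmain : Filter.Tendsto (fun t : ℝ =>
        ∑ j ∈ Finset.range k,
          (Complex.exp (t * μ) * ((t : ℂ) ^ j * ((j ! : ℂ))⁻¹)) • (N ^ j *ᵥ w))
        Filter.atTop (nhds 0) := by
      rw [show (0 : Fin n → ℂ) = ∑ j ∈ Finset.range k, (0 : Fin n → ℂ) from by simp]
      refine tendsto_finset_sum _ fun j _ => ?_
      have hc : Filter.Tendsto (fun t : ℝ =>
          Complex.exp (t * μ) * ((t : ℂ) ^ j * ((j ! : ℂ))⁻¹)) Filter.atTop (nhds 0) := by
        have := (aux_scalar hre j).mul_const (((j ! : ℂ))⁻¹)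
        rw [zero_mul] at this
        exact this.congr fun t => by ring
      have := hc.smul_const (N ^ j *ᵥ w)
      rwa [zero_smul] at this
    refine hmain.congr fun t => ?_
    rw [hdecomp t, Finset.smul_sum]
    refine Finset.sum_congr rfl fun j _ => ?_
    rw [smul_smul]
  have htop := Module.End.iSup_maxGenEigenspace_eq_top f
  have hvS : v ∈ S := by
    have : (⨆ μ : ℂ, f.maxGenEigenspace μ) ≤ S := iSup_le hle
    exact this (htop ▸ Submodule.mem_top)
  exact hvS

/-- Real vector version. -/
lemma aux2 (n : ℕ) (A : Matrix (Fin n) (Fin n) ℝ)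
    (h : ∀ mu ∈ spectrum ℂ (A.map (Complex.ofReal)), mu.re < 0) (v : Fin n → ℝ) :
    Filter.Tendsto (fun t : ℝ => NormedSpace.exp (t • A) *ᵥ v)
      Filter.atTop (nhds 0) := by
  have hC := aux1 n (A.map Complex.ofReal) h (fun i => (v i : ℂ))
  rw [tendsto_pi_nhds] at hC ⊢
  intro i
  have key : ∀ t : ℝ, (((NormedSpace.exp (t • A) *ᵥ v) i : ℝ) : ℂ)
      = (NormedSpace.exp (t • A.map Complex.ofReal) *ᵥ fun i => (v i : ℂ)) i := by
    intro t
    have hmv := RingHom.map_mulVec Complex.ofRealHom (NormedSpace.exp (t • A)) v i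
    rw [Complex.ofRealHom_eq_coe] at hmv
    rw [hmv]
    have hcont : Continuous (Complex.ofRealHom.mapMatrix :
        Matrix (Fin n) (Fin n) ℝ →+* Matrix (Fin n) (Fin n) ℂ) := by
      show Continuous fun M : Matrix (Fin n) (Fin n) ℝ => M.map Complex.ofRealHom
      exact continuous_id.matrix_map Complex.continuous_ofReal
    have hmap : (NormedSpace.exp (t • A)).map Complex.ofReal
        = NormedSpace.exp (t • A.map Complex.ofReal) := by
      rw [show (NormedSpace.exp (t • A)).map Complex.ofReal
          = Complex.ofRealHom.mapMatrix (NormedSpace.exp (t • A)) from rfl]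
      erw [map_exp Complex.ofRealHom.mapMatrix hcont]
      congr 1
      ext i j
      simp [Matrix.map_apply, Matrix.smul_apply, Complex.real_smul, Complex.ofReal_mul,
        RingHom.mapMatrix_apply, smul_eq_mul]
    show ((NormedSpace.exp (t • A)).map Complex.ofReal *ᵥ ⇑Complex.ofRealHom ∘ v) i
        = (NormedSpace.exp (t • A.map Complex.ofReal) *ᵥ fun i => ((v i : ℝ) : ℂ)) i
    rw [hmap]
    rfl
  have hre := (Complex.continuous_re.tendsto 0).comp (hC i)
  rw [Complex.zero_re] at hre
  exact hre.congr fun t => by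
    rw [Function.comp_apply, ← key t, Complex.ofReal_re]

theorem stmt13 (n : ℕ) (A : Matrix (Fin n) (Fin n) ℝ)
    (h : ∀ mu ∈ spectrum ℂ (A.map (Complex.ofReal)), mu.re < 0) :
    ∀ y₀ : EuclideanSpace ℝ (Fin n),
      Filter.Tendsto
        (fun t : ℝ =>
          NormedSpace.exp (t • (Matrix.toEuclideanCLM (𝕜 := ℝ) A)) y₀)
        Filter.atTop (nhds 0) := by
  intro y₀
  have h2 := aux2 n A h ((WithLp.equiv 2 (Fin n → ℝ)) y₀)
  have hcontCLM : Continuous (Matrix.toEuclideanCLM (𝕜 := ℝ) (n := Fin n)) := by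
    let L : Matrix (Fin n) (Fin n) ℝ →ₗ[ℝ]
        (EuclideanSpace ℝ (Fin n) →L[ℝ] EuclideanSpace ℝ (Fin n)) :=
      { toFun := Matrix.toEuclideanCLM (𝕜 := ℝ)
        map_add' := fun a b => map_add _ a b
        map_smul' := fun c a => map_smul _ c a }
    exact L.continuous_of_finiteDimensional
  have hexp : ∀ t : ℝ, NormedSpace.exp (t • (Matrix.toEuclideanCLM (𝕜 := ℝ) A))
      = Matrix.toEuclideanCLM (𝕜 := ℝ) (NormedSpace.exp (t • A)) := by
    intro t
    have := map_exp (Matrix.toEuclideanCLM (𝕜 := ℝ)) hcontCLM (t • A)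
    rw [_root_.map_smul] at this
    exact this.symm
  have happ : ∀ t : ℝ, Matrix.toEuclideanCLM (𝕜 := ℝ) (NormedSpace.exp (t • A)) y₀
      = (WithLp.equiv 2 (Fin n → ℝ)).symm
          (NormedSpace.exp (t • A) *ᵥ (WithLp.equiv 2 (Fin n → ℝ)) y₀) := by
    intro t
    rw [← (WithLp.equiv 2 (Fin n → ℝ)).symm_apply_apply
      (Matrix.toEuclideanCLM (𝕜 := ℝ) (NormedSpace.exp (t • A)) y₀)]
    congr 1
  have hcsymm : Continuous ((WithLp.equiv 2 (Fin n → ℝ)).symm) :=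
    (PiLp.continuousLinearEquiv 2 ℝ (fun _ : Fin n => ℝ)).symm.continuous
  have hfinal := (hcsymm.tendsto 0).comp h2
  have h0 : (WithLp.equiv 2 (Fin n → ℝ)).symm 0 = 0 := rfl
  rw [h0] at hfinal
  refine hfinal.congr fun t => ?_
  rw [Function.comp_apply, ← happ t, ← hexp t]
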